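/- Let f : ℝ → [0,∞) be a probability density on ℝ that is Lipschitz continuous with Lipschitz constant L > 0, and let F(x) := ∫_{−∞}^{x} f(t) dt be the associated distribution function. Then for every x ∈ ℝ, f(x) ≤ √(2·L·min(F(x), 1 − F(x))). -/

import Mathlib

open MeasureTheory Real

lemma lin_int (c L x a b : ℝ) :
    ∫ t in a..b, (c - L*(x - t)) = (c - L*x)*(b-a) + L*((b^2-a^2)/2) := by
  have h : (fun t : ℝ => c - L*(x-t)) = fun t => (c - L*x) + L*t := by
    funext t; ring
  rw [h, intervalIntegral.integral_add intervalIntegrable_const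
        ((continuous_mul_left _).intervalIntegrable a b),
      intervalIntegral.integral_const, intervalIntegral.integral_const_mul,
      integral_id]
  simp [smul_eq_mul]; ring

lemma lin_int2 (c L x a b : ℝ) :
    ∫ t in a..b, (c - L*(t - x)) = (c + L*x)*(b-a) - L*((b^2-a^2)/2) := by
  have h : (fun t : ℝ => c - L*(t-x)) = fun t => (c + L*x) + (-L)*t := by
    funext t; ring
  rw [h, intervalIntegral.integral_add intervalIntegrable_const
        ((continuous_mul_left _).intervalIntegrable a b),
      intervalIntegral.integral_const, intervalIntegral.integral_const_mul,
      integral_id]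
  simp [smul_eq_mul]; ring

theorem stmt2 (f : ℝ → ℝ) (L : ℝ) (hL : 0 < L)
    (hf_meas : Measurable f) (hf_nonneg : ∀ x, 0 ≤ f x)
    (hf_int : ∫ x : ℝ, f x = 1)
    (hf_lip : ∀ x y : ℝ, |f x - f y| ≤ L * |x - y|) :
    ∀ x : ℝ,
      f x ≤ Real.sqrt (2 * L *
        min (∫ t in Set.Iic x, f t) (1 - ∫ t in Set.Iic x, f t)) := by
  intro x
  have hint : Integrable f := by
    by_contra h
    rw [integral_undef h] at hf_int
    norm_num at hf_int
  set c := f x with hc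
  have hc0 : 0 ≤ c := hf_nonneg x
  set a : ℝ := x - c / L with ha
  set b : ℝ := x + c / L with hb
  have hcL : 0 ≤ c / L := div_nonneg hc0 hL.le
  have hab : a ≤ x := by simp [ha]; linarith
  have hxb : x ≤ b := by simp [hb]; linarith
  have hkey : (c - L*x)*(x-a) + L*((x^2-a^2)/2) = c^2/(2*L) := by
    simp only [ha]; field_simp; ring
  have hkey2 : (c + L*x)*(b-x) - L*((b^2-x^2)/2) = c^2/(2*L) := by
    simp only [hb]; field_simp; ring
  -- left bound : c^2/(2L) ≤ F x
  have hleft : c^2/(2*L) ≤ ∫ t in Set.Iic x, f t := by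
    have h1 : ∫ t in Set.Ioc a x, (c - L*(x - t)) ≤ ∫ t in Set.Ioc a x, f t := by
      apply setIntegral_mono_on
      · exact ((continuous_const.sub (continuous_const.mul
          (continuous_const.sub continuous_id'))).integrableOn_Ioc)
      · exact hint.integrableOn
      · exact measurableSet_Ioc
      · intro t ht
        have habs : |x - t| = x - t := abs_of_nonneg (by linarith [ht.2])
        have h2 := hf_lip x t
        rw [habs] at h2
        have := (abs_le.mp h2).2
        linarith
    have h2 : ∫ t in Set.Ioc a x, (c - L*(x - t)) = c^2/(2*L) := by
      rw [← intervalIntegral.integral_of_le hab, lin_int]; exact hkey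
    have h3 : ∫ t in Set.Ioc a x, f t ≤ ∫ t in Set.Iic x, f t := by
      apply setIntegral_mono_set hint.integrableOn
      · exact Filter.Eventually.of_forall fun t => hf_nonneg t
      · exact Filter.Eventually.of_forall fun t ht => ht.2
    linarith
  have hsplit : (∫ t in Set.Iic x, f t) + (∫ t in Set.Ioi x, f t) = 1 := by
    rw [← hf_int]
    exact intervalIntegral.integral_Iic_add_Ioi hint.integrableOn hint.integrableOn
  -- right bound : c^2/(2L) ≤ 1 - F x
  have hright : c^2/(2*L) ≤ 1 - ∫ t in Set.Iic x, f t := by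
    have h1 : ∫ t in Set.Ioc x b, (c - L*(t - x)) ≤ ∫ t in Set.Ioc x b, f t := by
      apply setIntegral_mono_on
      · exact ((continuous_const.sub (continuous_const.mul
          (continuous_id'.sub continuous_const))).integrableOn_Ioc)
      · exact hint.integrableOn
      · exact measurableSet_Ioc
      · intro t ht
        have habs : |x - t| = t - x := by
          rw [abs_sub_comm]; exact abs_of_nonneg (by linarith [ht.1])
        have h2 := hf_lip x t
        rw [habs] at h2
        have := (abs_le.mp h2).2
        linarith
    have h2 : ∫ t in Set.Ioc x b, (c - L*(t - x)) = c^2/(2*L) := by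
      rw [← intervalIntegral.integral_of_le hxb, lin_int2]; exact hkey2
    have h3 : ∫ t in Set.Ioc x b, f t ≤ ∫ t in Set.Ioi x, f t := by
      apply setIntegral_mono_set hint.integrableOn
      · exact Filter.Eventually.of_forall fun t => hf_nonneg t
      · exact Filter.Eventually.of_forall fun t ht => ht.1
    linarith
  have hmin : c^2/(2*L) ≤ min (∫ t in Set.Iic x, f t) (1 - ∫ t in Set.Iic x, f t) :=
    le_min hleft hright
  have hmin0 : 0 ≤ min (∫ t in Set.Iic x, f t) (1 - ∫ t in Set.Iic x, f t) :=
    le_trans (by positivity) hmin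
  rw [Real.le_sqrt hc0]
  have h2L : (0:ℝ) < 2*L := by linarith
  calc c^2 = 2*L*(c^2/(2*L)) := by field_simp
    _ ≤ 2*L*(min (∫ t in Set.Iic x, f t) (1 - ∫ t in Set.Iic x, f t)) :=
        mul_le_mul_of_nonneg_left hmin h2L.le
  exact mul_nonneg (by linarith) hmin0
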